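/- Let g : F_p → Z_{p^k} be any function and define h : F_p × F_p → Z_{p^k} by h(z_1, z_2) = p^{k−1} z_1 z_2 + g(z_2). Then h is generalized bent, and its Walsh transform is W_h(b_1, b_2) = p · ζ_{p^k}^{−p^{k−1} b_1 b_2 + g(b_1)} for all (b_1, b_2) ∈ F_p × F_p. -/

import Mathlib

open Finset

/-- `chr m z = ζ_m ^ z`, the additive character sending `z ∈ ℤ/m` to `e^{2πi z/m}`. -/
noncomputable def chr (m : ℕ) (z : ZMod m) : ℂ :=
  Complex.exp (2 * Real.pi * Complex.I * (z.val : ℂ) / (m : ℂ))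

/-- The Walsh transform of a generalized p-ary function `f : V_n → ℤ_{p^k}`,
where `V_n = (ℤ/p)^n` with the usual dot product. -/
noncomputable def walsh (p k n : ℕ) [NeZero p] [NeZero (p ^ k)]
    (f : (Fin n → ZMod p) → ZMod (p ^ k)) (a : Fin n → ZMod p) : ℂ :=
  ∑ x : Fin n → ZMod p, chr (p ^ k) (f x) * chr p (-(∑ i, a i * x i))

/-- `ξ = 1` if `p ≡ 1 (mod 4)` or `n` even, `ξ = √-1` otherwise. -/
noncomputable def xi (p n : ℕ) : ℂ :=
  if p % 4 = 1 ∨ Even n then 1 else Complex.I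

/-- The lift `ℤ/p → ℤ/p^k`, `z ↦ p^{k-1} z`. -/
def lift (p k : ℕ) (z : ZMod p) : ZMod (p ^ k) :=
  (p ^ (k - 1) : ZMod (p ^ k)) * (z.val : ZMod (p ^ k))

/-- Walsh transform of a function on `F_p × F_p` with values in `ℤ_{p^k}`. -/
noncomputable def walsh2 (p k : ℕ) [NeZero p] [NeZero (p ^ k)]
    (f : ZMod p → ZMod p → ZMod (p ^ k)) (b₁ b₂ : ZMod p) : ℂ :=
  ∑ z₁ : ZMod p, ∑ z₂ : ZMod p, chr (p ^ k) (f z₁ z₂) * chr p (-(b₁ * z₁ + b₂ * z₂))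

open Finset

lemma chr_eq_pow (m : ℕ) (z : ZMod m) :
    chr m z = Complex.exp (2 * Real.pi * Complex.I / m) ^ z.val := by
  rw [chr, ← Complex.exp_nat_mul]
  ring_nf

lemma zeta_pow_self (m : ℕ) [NeZero m] :
    Complex.exp (2 * Real.pi * Complex.I / m) ^ m = 1 := by
  rw [← Complex.exp_nat_mul]
  have hm : (m : ℂ) ≠ 0 := Nat.cast_ne_zero.2 (NeZero.ne m)
  rw [show (m : ℂ) * (2 * Real.pi * Complex.I / m) = 2 * Real.pi * Complex.I by
    field_simp]
  exact Complex.exp_two_pi_mul_I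

lemma zeta_pow_mod (m : ℕ) [NeZero m] (n : ℕ) :
    Complex.exp (2 * Real.pi * Complex.I / m) ^ (n % m) =
      Complex.exp (2 * Real.pi * Complex.I / m) ^ n := by
  conv_rhs => rw [← Nat.div_add_mod n m]
  rw [pow_add, pow_mul, zeta_pow_self, one_pow, one_mul]

lemma chr_add (m : ℕ) [NeZero m] (a b : ZMod m) :
    chr m (a + b) = chr m a * chr m b := by
  rw [chr_eq_pow, chr_eq_pow, chr_eq_pow, ZMod.val_add, zeta_pow_mod, pow_add]

lemma chr_zero (m : ℕ) [NeZero m] : chr m 0 = 1 := by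
  simp [chr]

lemma zeta_ne_one (p : ℕ) (hp : p.Prime) :
    Complex.exp (2 * Real.pi * Complex.I / p) ≠ 1 := by
  intro h
  rw [Complex.exp_eq_one_iff] at h
  obtain ⟨n, hn⟩ := h
  have hp0 : (p : ℂ) ≠ 0 := Nat.cast_ne_zero.2 hp.pos.ne'
  have h2 : (2 * (Real.pi : ℂ) * Complex.I) ≠ 0 := by
    simp [Real.pi_ne_zero, Complex.I_ne_zero, Complex.ofReal_ne_zero]
  have h1 : (1 : ℂ) = n * p := by
    field_simp at hn
    have h3 : (2 * (Real.pi : ℂ) * Complex.I) * 1 =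
        (2 * (Real.pi : ℂ) * Complex.I) * ((n : ℂ) * p) := by
      rw [mul_one]; linear_combination (2 * (Real.pi : ℂ) * Complex.I) * hn
    exact mul_left_cancel₀ h2 h3
  have h4 : (n * p : ℤ) = 1 := by exact_mod_cast h1.symm
  have h5 : (p : ℤ) ∣ 1 := ⟨n, by linarith [h4]⟩
  have h6 := Int.le_of_dvd one_pos h5
  have := hp.one_lt
  omega


lemma sum_chr_univ (p : ℕ) [NeZero p] (hp : p.Prime) :
    ∑ z : ZMod p, chr p z = 0 := by
  obtain ⟨n, rfl⟩ : ∃ n, p = n + 1 := ⟨p - 1, by have := hp.pos; omega⟩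
  have h : ∑ z : ZMod (n + 1), chr (n + 1) z
      = ∑ i ∈ Finset.range (n + 1),
          Complex.exp (2 * Real.pi * Complex.I / ((n + 1 : ℕ) : ℂ)) ^ i := by
    rw [← Fin.sum_univ_eq_sum_range]
    exact Finset.sum_congr rfl fun z _ => by rw [chr_eq_pow]; rfl
  rw [h, geom_sum_eq (zeta_ne_one (n + 1) hp), zeta_pow_self (n + 1)]
  simp

lemma sum_chr (p : ℕ) [NeZero p] (hp : p.Prime) (c : ZMod p) :
    ∑ z : ZMod p, chr p (c * z) = if c = 0 then (p : ℂ) else 0 := by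
  haveI : Fact p.Prime := ⟨hp⟩
  split_ifs with hc
  · simp [hc, chr_zero, Finset.card_univ, ZMod.card]
  · rw [← sum_chr_univ p hp]
    exact Fintype.sum_equiv (Equiv.mulLeft₀ c hc) _ _ fun z => rfl

lemma lift_val (p k : ℕ) [NeZero p] [NeZero (p ^ k)] (hp : 1 < p) (hk : 1 ≤ k)
    (z : ZMod p) : (lift p k z).val = p ^ (k - 1) * z.val := by
  have hlt : p ^ (k - 1) * z.val < p ^ k := by
    have h1 : z.val < p := ZMod.val_lt z
    have h2 : 0 < p ^ (k - 1) := pow_pos (by omega) _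
    calc p ^ (k - 1) * z.val < p ^ (k - 1) * p := by
          exact Nat.mul_lt_mul_of_le_of_lt (le_refl _) h1 h2
      _ = p ^ k := by rw [← pow_succ]; congr 1; omega
  rw [lift, show ((p : ZMod (p ^ k)) ^ (k - 1)) * (z.val : ZMod (p ^ k))
      = ((p ^ (k - 1) * z.val : ℕ) : ZMod (p ^ k)) by push_cast; ring,
    ZMod.val_cast_of_lt hlt]

lemma chr_lift (p k : ℕ) [NeZero p] [NeZero (p ^ k)] (hp : 1 < p) (hk : 1 ≤ k)
    (z : ZMod p) : chr (p ^ k) (lift p k z) = chr p z := by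
  rw [chr, chr, lift_val p k hp hk]
  congr 1
  have hp0 : (p : ℂ) ≠ 0 := Nat.cast_ne_zero.2 (by omega)
  have hpk : ((p ^ k : ℕ) : ℂ) = (p : ℂ) ^ (k - 1) * p := by
    push_cast
    rw [← pow_succ]; congr 1; omega
  rw [hpk]
  push_cast
  have h1 : ((p : ℂ)) ^ (k - 1) ≠ 0 := pow_ne_zero _ hp0
  field_simp

lemma lift_neg (p k : ℕ) [NeZero p] [NeZero (p ^ k)] (hk : 1 ≤ k) (z : ZMod p) :
    lift p k (-z) = -(lift p k z) := by
  by_cases hz : z = 0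
  · simp [hz, lift]
  · rw [lift, lift, ZMod.neg_val, if_neg hz]
    have h1 : z.val ≤ p := (ZMod.val_lt z).le
    rw [Nat.cast_sub h1]
    have h2 : (p : ZMod (p ^ k)) ^ (k - 1) * (p : ZMod (p ^ k)) = 0 := by
      rw [← pow_succ, show k - 1 + 1 = k by omega]
      exact_mod_cast ZMod.natCast_self (p ^ k)
    ring_nf
    rw [mul_comm ((p : ZMod (p ^ k))) _, h2]
    ring

lemma abs_chr (m : ℕ) (z : ZMod m) : ‖chr m z‖ = 1 := by
  rw [chr, show 2 * (Real.pi : ℂ) * Complex.I * (z.val : ℂ) / (m : ℂ)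
      = ((2 * Real.pi * z.val / m : ℝ) : ℂ) * Complex.I by push_cast; ring]
  exact Complex.norm_exp_ofReal_mul_I _

theorem stmt_7 (p k : ℕ) [NeZero p] [NeZero (p ^ k)] (hp : p.Prime) (hodd : Odd p)
    (hk : 1 ≤ k) (g : ZMod p → ZMod (p ^ k)) (b₁ b₂ : ZMod p) :
    ‖walsh2 p k (fun z₁ z₂ => lift p k (z₁ * z₂) + g z₂) b₁ b₂‖ = p ∧
    walsh2 p k (fun z₁ z₂ => lift p k (z₁ * z₂) + g z₂) b₁ b₂ =
      (p : ℂ) * chr (p ^ k) (-(lift p k (b₁ * b₂)) + g b₁) := by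
  have key : walsh2 p k (fun z₁ z₂ => lift p k (z₁ * z₂) + g z₂) b₁ b₂ =
      (p : ℂ) * chr (p ^ k) (-(lift p k (b₁ * b₂)) + g b₁) := by
    rw [walsh2]
    have hstep : ∀ z₁ z₂ : ZMod p,
        chr (p ^ k) (lift p k (z₁ * z₂) + g z₂) * chr p (-(b₁ * z₁ + b₂ * z₂)) =
        chr p ((z₂ - b₁) * z₁) * (chr (p ^ k) (g z₂) * chr p (-(b₂ * z₂))) := by
      intro z₁ z₂
      rw [chr_add (p ^ k), chr_lift p k hp.one_lt hk,
        show -(b₁ * z₁ + b₂ * z₂) = -(b₁ * z₁) + -(b₂ * z₂) by ring, chr_add p,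
        show (z₂ - b₁) * z₁ = z₁ * z₂ + -(b₁ * z₁) by ring, chr_add p]
      ring
    simp_rw [hstep]
    rw [Finset.sum_comm]
    have h2 : ∀ z₂ : ZMod p,
        ∑ z₁ : ZMod p, chr p ((z₂ - b₁) * z₁) * (chr (p ^ k) (g z₂) * chr p (-(b₂ * z₂)))
        = (if z₂ = b₁ then (p : ℂ) else 0) * (chr (p ^ k) (g z₂) * chr p (-(b₂ * z₂))) := by
      intro z₂
      rw [← Finset.sum_mul, sum_chr p hp]
      congr 1
      simp [sub_eq_zero]
    simp_rw [h2]
    simp only [ite_mul, zero_mul]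
    rw [Finset.sum_ite_eq' Finset.univ b₁
      (fun z₂ => (p : ℂ) * (chr (p ^ k) (g z₂) * chr p (-(b₂ * z₂))))]
    rw [if_pos (Finset.mem_univ b₁), chr_add (p ^ k),
      ← lift_neg p k hk, chr_lift p k hp.one_lt hk,
      show -(b₁ * b₂) = -(b₂ * b₁) by ring]
    ring
  refine ⟨?_, key⟩
  rw [key, norm_mul, abs_chr, mul_one, Complex.norm_natCast]
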